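/- Let A be a central simple K-algebra with filtration FA extending FK (nontrivial negative part), and let M be an irreducible left FA-glider ideal of infinite essential length. If N = M_i is a left A-module for some i ∈ ℕ, then M_i = M, i.e., the whole glider M is a left A-module. -/

import Mathlib

/-- A ℤ-filtration on a ring `A` by additive subgroups (= ℤ-submodules):
an ascending chain with `F n * F m ⊆ F (n+m)` and `1 ∈ F 0`. -/
def IsZFiltration {A : Type*} [Ring A] (F : ℤ → Submodule ℤ A) : Prop :=
  Monotone F ∧ (1 : A) ∈ F 0 ∧
    ∀ (n m : ℤ), ∀ x ∈ F n, ∀ y ∈ F m, x * y ∈ F (n + m)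

/-- A left `F`-glider ideal inside `A`: a descending chain of additive subgroups
with `F i * M j ⊆ M (j - i)` for `i ≤ j`. -/
def IsGlider {A : Type*} [Ring A] (F : ℤ → Submodule ℤ A) (M : ℕ → Submodule ℤ A) : Prop :=
  Antitone M ∧
    ∀ (i : ℤ) (j : ℕ), i ≤ (j : ℤ) →
      ∀ a ∈ F i, ∀ m ∈ M j, a * m ∈ M ((j : ℤ) - i).toNat

/-- The body of a glider: `B(M) = ⋂ᵢ Mᵢ`. -/
def gliderBody {A : Type*} [Ring A] (M : ℕ → Submodule ℤ A) : Submodule ℤ A := ⨅ i, M i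

/-- Triviality of a subglider `N` of `M`: type T1, T2 or T3. -/
def IsTrivialSubglider {A : Type*} [Ring A] (M N : ℕ → Submodule ℤ A) : Prop :=
  (∃ n, N n = gliderBody N ∧ M n ≠ gliderBody M) ∨
  (∃ n, N n = ⊥ ∧ M n ≠ ⊥) ∨
  (∃ α : ℕ → ℕ, Monotone α ∧ (∀ n, N n = M (α n)) ∧
      ∀ m n : ℕ, m ≤ n → (α (n - m) : ℤ) ≤ (α n : ℤ) - (m : ℤ))

/-- An irreducible glider: every subglider is trivial. -/
def IsIrreducibleGlider {A : Type*} [Ring A] (F : ℤ → Submodule ℤ A)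
    (M : ℕ → Submodule ℤ A) : Prop :=
  IsGlider F M ∧
    ∀ N : ℕ → Submodule ℤ A, IsGlider F N → (∀ i, N i ≤ M i) → IsTrivialSubglider M N

/-- Let `A` be a central simple `K`-algebra with filtration `FA` extending `FK`
(nontrivial negative part), and `M` an irreducible left `FA`-glider ideal of infinite
essential length. If `M i` is a left `A`-module for some `i`, then `M i = M 0`. -/
theorem stmt_11 {K A : Type*} [Field K] [Ring A] [Algebra K A]
    [FiniteDimensional K A] [Algebra.IsCentral K A] [IsSimpleRing A]
    (FA : ℤ → Submodule ℤ A) (FK : ℤ → Submodule ℤ K)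
    (hFA : IsZFiltration FA)
    (hexh : ∀ a : A, ∃ n : ℤ, a ∈ FA n)
    (hsep : ∀ a : A, (∀ n : ℤ, a ∈ FA n) → a = 0)
    (hext : ∀ (n : ℤ) (x : K), algebraMap K A x ∈ FA n ↔ x ∈ FK n)
    (hneg : ∀ n : ℕ, FK (-(n : ℤ)) ≠ ⊥)
    (M : ℕ → Submodule ℤ A)
    (hirr : IsIrreducibleGlider FA M)
    (hinf : ∀ d : ℕ, ∃ n : ℕ, d ≤ n ∧ M (n + 1) < M n)
    (i : ℕ) (hmod : ∀ a : A, ∀ m ∈ M i, a * m ∈ M i) :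
    M i = M 0 := by
  obtain ⟨hg, -⟩ := hirr
  apply le_antisymm (hg.1 (Nat.zero_le i))
  -- pick a nonzero λ ∈ FK (-i)
  obtain ⟨lam, hlam, hlamne⟩ : ∃ lam, lam ∈ FK (-(i : ℤ)) ∧ lam ≠ 0 := by
    by_contra h
    push_neg at h
    exact hneg i (by
      ext x
      simp only [Submodule.mem_bot]
      exact ⟨fun hx => by by_contra hne; exact hne (h x hx), fun hx => hx ▸ (FK _).zero_mem⟩)
  intro m hm
  have ha : algebraMap K A lam ∈ FA (-(i : ℤ)) := (hext _ _).mpr hlam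
  have h1 : algebraMap K A lam * m ∈ M (((0 : ℕ) : ℤ) - (-(i : ℤ))).toNat :=
    hg.2 (-(i : ℤ)) 0 (by simp) _ ha m hm
  have h2 : algebraMap K A lam * m ∈ M i := by
    simpa using h1
  have h3 := hmod (algebraMap K A lam⁻¹) _ h2
  have : algebraMap K A lam⁻¹ * (algebraMap K A lam * m) = m := by
    rw [← mul_assoc, ← map_mul, inv_mul_cancel₀ hlamne, map_one, one_mul]
  rwa [this] at h3
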